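/- Let d and n be integers with d ≥ 4 and n ≥ 6d² − 16d + 13. Then every complex root a of the Ehrhart polynomial i(Δ(d,n), z) satisfies Re(a) < 1. -/

import Mathlib

/-- `f_{n,s}(z) = C(n,s) · ∏_{j=1}^{n−1} ((d−s)·z + j − s)`. -/
noncomputable def hyperF (d n s : ℕ) (z : ℂ) : ℂ :=
  (n.choose s : ℂ) * ∏ j ∈ Finset.Icc 1 (n - 1), (((d : ℂ) - (s : ℂ)) * z + (j : ℂ) - (s : ℂ))

/-- The Ehrhart polynomial of the hypersimplex `Δ(d,n)`:
`i(Δ(d,n), z) = (1/(n−1)!) · Σ_{s=0}^{d−1} (−1)^s · f_{n,s}(z)`. -/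
noncomputable def ehrhartPoly (d n : ℕ) (z : ℂ) : ℂ :=
  (1 / ((n - 1).factorial : ℂ)) * ∑ s ∈ Finset.range d, (-1) ^ s * hyperF d n s z


open Finset


lemma facA (d s j : ℕ) (z : ℂ) (hx : 1 ≤ z.re) (hjs : j < s) (hsd : s ≤ d) :
    ‖(((d : ℂ) - s) * z + j - s)‖ ≤ ‖((d : ℂ) * z + j)‖ := by
  rw [← pow_le_pow_iff_left₀ (norm_nonneg _) (norm_nonneg _) (by norm_num : 2 ≠ 0)]
  rw [Complex.sq_norm, Complex.sq_norm]
  simp only [Complex.normSq_apply, Complex.add_re, Complex.add_im, Complex.sub_re,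
    Complex.sub_im, Complex.mul_re, Complex.mul_im, Complex.natCast_re, Complex.natCast_im]
  have hds : (s:ℝ) ≤ (d:ℝ) := by exact_mod_cast hsd
  have hjs' : (j:ℝ) + 1 ≤ (s:ℝ) := by exact_mod_cast hjs
  have hj0 : (0:ℝ) ≤ j := by positivity
  have hs0 : (0:ℝ) ≤ s := by positivity
  have h1 : (0:ℝ) ≤ (s:ℝ) * z.re + s := by nlinarith
  have h2 : (0:ℝ) ≤ (2*(d:ℝ) - s) * z.re + 2*j - s := by nlinarith
  have h3 : (0:ℝ) ≤ ((d:ℝ)^2 - ((d:ℝ)-s)^2) * z.im^2 :=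
    mul_nonneg (by nlinarith) (sq_nonneg _)
  ring_nf
  nlinarith [mul_nonneg h1 h2]

lemma facB (d s j : ℕ) (z : ℂ) (hx : 1 ≤ z.re) (hsj : s ≤ j) (hjd : j ≤ d) (hsd : s + 1 ≤ d) :
    (d:ℝ) * ‖(((d : ℂ) - s) * z + j - s)‖
      ≤ ((d:ℝ) - s) * ‖((d : ℂ) * z + j)‖ := by
  have hds : (s:ℝ) + 1 ≤ (d:ℝ) := by exact_mod_cast hsd
  have hsj' : (s:ℝ) ≤ (j:ℝ) := by exact_mod_cast hsj
  have hjd' : (j:ℝ) ≤ (d:ℝ) := by exact_mod_cast hjd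
  have hs0 : (0:ℝ) ≤ s := by positivity
  have hd0 : (0:ℝ) < d := by nlinarith
  have hds0 : (0:ℝ) < (d:ℝ) - s := by nlinarith
  rw [← pow_le_pow_iff_left₀ (by positivity) (by positivity) (by norm_num : 2 ≠ 0),
    mul_pow, mul_pow, Complex.sq_norm, Complex.sq_norm]
  simp only [Complex.normSq_apply, Complex.add_re, Complex.add_im, Complex.sub_re,
    Complex.sub_im, Complex.mul_re, Complex.mul_im, Complex.natCast_re, Complex.natCast_im]
  have hu : (0:ℝ) ≤ ((d:ℝ)-s) * z.re + j - s := by nlinarith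
  have key : (d:ℝ) * (((d:ℝ)-s) * z.re + j - s) ≤ ((d:ℝ)-s) * ((d:ℝ)*z.re + j) := by nlinarith
  ring_nf
  nlinarith [mul_nonneg (mul_nonneg hd0.le hu) (sub_nonneg.2 key), sq_nonneg z.im,
    mul_le_mul key key (by positivity) (by positivity)]

lemma facC (d s j : ℕ) (z : ℂ) (hx : 1 ≤ z.re) (hdj : d < j) (hs1 : 1 ≤ s) (hsd : s + 1 ≤ d) :
    ((d:ℝ) + j) * ‖(((d : ℂ) - s) * z + j - s)‖
      ≤ ((d:ℝ) + j - 2*s) * ‖((d : ℂ) * z + j)‖ := by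
  have hds : (s:ℝ) + 1 ≤ (d:ℝ) := by exact_mod_cast hsd
  have hdj' : (d:ℝ) + 1 ≤ (j:ℝ) := by exact_mod_cast hdj
  have hs0 : (1:ℝ) ≤ s := by exact_mod_cast hs1
  have hpos : (0:ℝ) < (d:ℝ) + j - 2*s := by nlinarith
  rw [← pow_le_pow_iff_left₀ (by positivity) (by positivity) (by norm_num : 2 ≠ 0),
    mul_pow, mul_pow, Complex.sq_norm, Complex.sq_norm]
  simp only [Complex.normSq_apply, Complex.add_re, Complex.add_im, Complex.sub_re,
    Complex.sub_im, Complex.mul_re, Complex.mul_im, Complex.natCast_re, Complex.natCast_im]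
  have hu : (0:ℝ) ≤ ((d:ℝ)-s) * z.re + j - s := by nlinarith
  have key : ((d:ℝ)+j) * (((d:ℝ)-s) * z.re + j - s)
      ≤ ((d:ℝ)+j-2*s) * ((d:ℝ)*z.re + j) := by
    nlinarith [mul_nonneg (mul_nonneg (by linarith : (0:ℝ) ≤ (s:ℝ)) (by linarith : (0:ℝ) ≤ (j:ℝ) - d)) (by linarith : (0:ℝ) ≤ z.re - 1)]
  have key2 : ((d:ℝ)+j) * ((d:ℝ)-s) ≤ ((d:ℝ)+j-2*s) * d := by nlinarith
  ring_nf
  nlinarith [mul_le_mul key key (by positivity) (by positivity),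
    mul_le_mul key2 key2 (by nlinarith) (by nlinarith), sq_nonneg z.im,
    mul_nonneg (mul_nonneg hpos.le hpos.le) (sq_nonneg z.im)]

lemma natProd (d n s : ℕ) (hs1 : 1 ≤ s) (hsd : s + 1 ≤ d) (hd : 4 ≤ d) (hn : 3*d ≤ n) :
    (n-d+2)^(2*s) * ∏ j ∈ Ioc d (n-1), (d + j - 2*s)
      ≤ (2*d)^(2*s) * ∏ j ∈ Ioc d (n-1), (d + j) := by
  have hA : ∏ j ∈ Ioc d (n-1), (d + j - 2*s) = ∏ k ∈ Ioc (2*d-2*s) (n-1+d-2*s), k := by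
    apply Finset.prod_nbij' (fun j => d + j - 2*s) (fun k => k + 2*s - d)
    · intro a ha; simp only [mem_Ioc] at *; omega
    · intro a ha; simp only [mem_Ioc] at *; omega
    · intro a ha; simp only [mem_Ioc] at *; omega
    · intro a ha; simp only [mem_Ioc] at *; omega
    · intro a ha; rfl
  have hB : ∏ j ∈ Ioc d (n-1), (d + j) = ∏ k ∈ Ioc (2*d) (n-1+d), k := by
    apply Finset.prod_nbij' (fun j => d + j) (fun k => k - d)
    · intro a ha; simp only [mem_Ioc] at *; omega
    · intro a ha; simp only [mem_Ioc] at *; omega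
    · intro a ha; simp only [mem_Ioc] at *; omega
    · intro a ha; simp only [mem_Ioc] at *; omega
    · intro a ha; rfl
  rw [hA, hB]
  rw [← Finset.prod_Ioc_consecutive _ (by omega : 2*d-2*s ≤ 2*d) (by omega : 2*d ≤ n-1+d-2*s),
    ← Finset.prod_Ioc_consecutive _ (by omega : 2*d ≤ n-1+d-2*s) (by omega : n-1+d-2*s ≤ n-1+d)]
  have c1 : ∏ k ∈ Ioc (2*d-2*s) (2*d), k ≤ (2*d)^(2*s) := by
    calc ∏ k ∈ Ioc (2*d-2*s) (2*d), k ≤ ∏ _k ∈ Ioc (2*d-2*s) (2*d), (2*d) :=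
      Finset.prod_le_prod (fun i _ => Nat.zero_le _) (fun i hi => by
        simp only [mem_Ioc] at hi; omega)
    _ = (2*d)^(2*s) := by rw [Finset.prod_const, Nat.card_Ioc]; congr 1; omega
  have c2 : (n-d+2)^(2*s) ≤ ∏ k ∈ Ioc (n-1+d-2*s) (n-1+d), k := by
    calc (n-d+2)^(2*s) = ∏ _k ∈ Ioc (n-1+d-2*s) (n-1+d), (n-d+2) := by
          rw [Finset.prod_const, Nat.card_Ioc]; congr 1; omega
    _ ≤ ∏ k ∈ Ioc (n-1+d-2*s) (n-1+d), k :=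
      Finset.prod_le_prod (fun i _ => Nat.zero_le _) (fun i hi => by
        simp only [mem_Ioc] at hi; omega)
  calc (n-d+2)^(2*s) * ((∏ k ∈ Ioc (2*d-2*s) (2*d), k) * ∏ k ∈ Ioc (2*d) (n-1+d-2*s), k)
      = (∏ k ∈ Ioc (2*d-2*s) (2*d), k) * ((n-d+2)^(2*s) * ∏ k ∈ Ioc (2*d) (n-1+d-2*s), k) := by ring
    _ ≤ (2*d)^(2*s) * ((∏ k ∈ Ioc (n-1+d-2*s) (n-1+d), k) * ∏ k ∈ Ioc (2*d) (n-1+d-2*s), k) :=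
        Nat.mul_le_mul c1 (Nat.mul_le_mul c2 le_rfl)
    _ = (2*d)^(2*s) * ((∏ k ∈ Ioc (2*d) (n-1+d-2*s), k) * ∏ k ∈ Ioc (n-1+d-2*s) (n-1+d), k) := by ring

lemma lamExp (d s : ℕ) (hs : s < d) :
    (((d:ℝ)-s)/d)^(d-s+1) ≤ Real.exp (-((s:ℝ)*((d-s+1 : ℕ) : ℝ)/d)) := by
  have hd0 : (0:ℝ) < d := by
    have : (1:ℝ) ≤ d := by exact_mod_cast Nat.one_le_iff_ne_zero.2 (by omega)
    linarith
  have hsd : (s:ℝ) ≤ d := by exact_mod_cast hs.le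
  have hbase : (0:ℝ) ≤ ((d:ℝ)-s)/d := by
    apply div_nonneg (by linarith) hd0.le
  have h1 : ((d:ℝ)-s)/d ≤ Real.exp (-((s:ℝ)/d)) := by
    have := Real.add_one_le_exp (-((s:ℝ)/d))
    have heq : ((d:ℝ)-s)/d = -((s:ℝ)/d) + 1 := by field_simp; ring
    linarith
  calc (((d:ℝ)-s)/d)^(d-s+1) ≤ (Real.exp (-((s:ℝ)/d)))^(d-s+1) :=
        pow_le_pow_left₀ hbase h1 _
    _ = Real.exp (-((s:ℝ)*((d-s+1 : ℕ) : ℝ)/d)) := by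
        rw [← Real.exp_nat_mul]; congr 1; ring

lemma expNeg1 : Real.exp (-1) ≤ 0.368 := by
  rw [Real.exp_neg]
  have h := Real.exp_one_gt_d9
  rw [inv_le_iff_one_le_mul₀ (Real.exp_pos 1)]
  nlinarith [h]

lemma exp15 : (6/5 : ℝ) ≤ Real.exp (1/5) := by
  have := Real.add_one_le_exp (1/5 : ℝ)
  linarith

lemma expNeg85 : Real.exp (-(8/5)) ≤ 0.213 := by
  rw [Real.exp_neg]
  have h1 : Real.exp (8/5 : ℝ) = Real.exp 1 * Real.exp (1/5) ^ 3 := by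
    rw [← Real.exp_nat_mul, ← Real.exp_add]; norm_num
  have h3 : ((6:ℝ)/5)^3 ≤ Real.exp (1/5) ^ 3 := pow_le_pow_left₀ (by norm_num) exp15 3
  have h2 : (4.697 : ℝ) ≤ Real.exp (8/5) := by
    rw [h1]
    have := Real.exp_one_gt_d9
    nlinarith [Real.exp_pos (1/5 : ℝ)]
  rw [inv_le_iff_one_le_mul₀ (Real.exp_pos _)]
  nlinarith [h2]

lemma expNeg95 : Real.exp (-(9/5)) ≤ 0.1775 := by
  rw [Real.exp_neg]
  have h1 : Real.exp (9/5 : ℝ) = Real.exp 1 * Real.exp (1/5) ^ 4 := by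
    rw [← Real.exp_nat_mul, ← Real.exp_add]; norm_num
  have h3 : ((6:ℝ)/5)^4 ≤ Real.exp (1/5) ^ 4 := pow_le_pow_left₀ (by norm_num) exp15 4
  have h2 : (5.6366 : ℝ) ≤ Real.exp (9/5) := by
    rw [h1]
    have := Real.exp_one_gt_d9
    nlinarith [Real.exp_pos (1/5 : ℝ)]
  rw [inv_le_iff_one_le_mul₀ (Real.exp_pos _)]
  nlinarith [h2]

lemma exp43 : Real.exp (4/3 : ℝ) ≤ 3.7941 := by
  have h1 : Real.exp (4/3 : ℝ) = Real.exp 1 * Real.exp (1/3) := by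
    rw [← Real.exp_add]; norm_num
  have h2 : Real.exp (1/3 : ℝ) ≤ 1.39571 := by
    have := Real.exp_bound' (by norm_num : (0:ℝ) ≤ 1/3) (by norm_num : (1/3 : ℝ) ≤ 1) (n := 4) (by norm_num)
    calc Real.exp (1/3 : ℝ) ≤ ∑ m ∈ Finset.range 4, (1/3:ℝ)^m / m.factorial
          + (1/3:ℝ)^4 * (4+1) / (Nat.factorial 4 * 4) := this
      _ ≤ 1.39571 := by norm_num [Finset.sum_range_succ, Nat.factorial]
  have := Real.exp_one_lt_d9
  nlinarith [Real.exp_pos (1/3 : ℝ)]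

lemma sumBound (d : ℕ) (hd : 4 ≤ d) (u : ℝ) (hu0 : 0 ≤ u)
    (hcase : (d = 4 ∧ u ≤ 8/5) ∨ (5 ≤ d ∧ u ≤ 4/3)) :
    ∑ s ∈ Ioc 0 (d-1), (((d:ℝ)-s)/d)^(d-s+1) * u^s / (s.factorial : ℝ) < 1 := by
  set f : ℕ → ℝ := fun s => (((d:ℝ)-s)/d)^(d-s+1) * u^s / (s.factorial : ℝ) with hf
  have hd0 : (0:ℝ) < d := by
    have : (4:ℝ) ≤ d := by exact_mod_cast hd
    linarith
  have hsplit : ∑ s ∈ Ioc 0 (d-1), f s = (f 1 + f 2 + f 3) + ∑ s ∈ Ioc 3 (d-1), f s := by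
    rw [← Finset.sum_Ioc_consecutive f (by omega : 0 ≤ 3) (by omega : 3 ≤ d-1)]
    congr 1
    show ∑ s ∈ Ioc 0 3, f s = _
    rw [show Ioc 0 3 = ({1,2,3} : Finset ℕ) from by decide]
    rw [Finset.sum_insert (by decide), Finset.sum_insert (by decide), Finset.sum_singleton]
    ring
  rw [hsplit]
  rcases hcase with ⟨rfl, hu⟩ | ⟨hd5, hu⟩
  · rw [show Ioc 3 (4-1) = (∅ : Finset ℕ) from rfl, Finset.sum_empty]
    have h2 : u^2 ≤ (8/5)^2 := pow_le_pow_left₀ hu0 hu 2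
    have h3 : u^3 ≤ (8/5)^3 := pow_le_pow_left₀ hu0 hu 3
    simp only [hf]
    norm_num [Nat.factorial]
    nlinarith
  · -- d ≥ 5
    have hd5' : (5:ℝ) ≤ d := by exact_mod_cast hd5
    have hu1 : u^1 ≤ (4/3)^1 := pow_le_pow_left₀ hu0 hu 1
    have hu2 : u^2 ≤ (4/3)^2 := pow_le_pow_left₀ hu0 hu 2
    have hu3 : u^3 ≤ (4/3)^3 := pow_le_pow_left₀ hu0 hu 3
    have lam : ∀ s : ℕ, 0 < s → s < d → ∀ c : ℝ,
        (-((s:ℝ)*((d:ℝ)-s+1)/d)) ≤ c → (((d:ℝ)-s)/d)^(d-s+1) ≤ Real.exp c := by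
      intro s hs0 hsd c hc
      refine (lamExp d s hsd).trans (Real.exp_le_exp.2 ?_)
      rwa [Nat.cast_add, Nat.cast_sub hsd.le, Nat.cast_one]
    have lam1 : (((d:ℝ)-1)/d)^(d-1+1) ≤ 0.368 := by
      have h := lam 1 (by omega) (by omega) (-1)
        (by rw [neg_le_neg_iff, le_div_iff₀ hd0]; push_cast; nlinarith)
      push_cast at h
      exact h.trans expNeg1
    have lam2 : (((d:ℝ)-2)/d)^(d-2+1) ≤ 0.213 := by
      have h := lam 2 (by omega) (by omega) (-(8/5))
        (by rw [neg_le_neg_iff, le_div_iff₀ hd0]; push_cast; nlinarith)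
      push_cast at h
      exact h.trans expNeg85
    have lam3 : (((d:ℝ)-3)/d)^(d-3+1) ≤ 0.1775 := by
      have h := lam 3 (by omega) (by omega) (-(9/5))
        (by rw [neg_le_neg_iff, le_div_iff₀ hd0]; push_cast; nlinarith)
      push_cast at h
      exact h.trans expNeg95
    have t1 : f 1 ≤ 0.368 * (4/3) := by
      simp only [hf]
      push_cast [Nat.factorial_one]
      rw [div_one]
      calc (((d:ℝ)-1)/d)^(d-1+1) * u^1 ≤ 0.368 * (4/3)^1 := by
            apply mul_le_mul lam1 hu1 (by positivity) (by norm_num)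
        _ = 0.368 * (4/3) := by norm_num
    have t2 : f 2 ≤ 0.213 * (16/9) / 2 := by
      simp only [hf]
      push_cast [show Nat.factorial 2 = 2 from rfl]
      rw [div_le_div_iff_of_pos_right (by norm_num : (0:ℝ) < 2)]
      calc (((d:ℝ)-2)/d)^(d-2+1) * u^2 ≤ 0.213 * (4/3)^2 := by
            apply mul_le_mul lam2 hu2 (by positivity) (by norm_num)
        _ = 0.213 * (16/9) := by norm_num
    have t3 : f 3 ≤ 0.1775 * (64/27) / 6 := by
      simp only [hf]
      push_cast [show Nat.factorial 3 = 6 from rfl]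
      rw [div_le_div_iff_of_pos_right (by norm_num : (0:ℝ) < 6)]
      calc (((d:ℝ)-3)/d)^(d-3+1) * u^3 ≤ 0.1775 * (4/3)^3 := by
            apply mul_le_mul lam3 hu3 (by positivity) (by norm_num)
        _ = 0.1775 * (64/27) := by norm_num
    have t4 : ∑ s ∈ Ioc 3 (d-1), f s ≤ Real.exp (4/3) - 293/81 := by
      have step1 : ∑ s ∈ Ioc 3 (d-1), f s ≤ ∑ s ∈ Ioc 3 (d-1), (4/3:ℝ)^s / s.factorial := by
        apply Finset.sum_le_sum
        intro s hs
        simp only [mem_Ioc] at hs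
        have hsd : s < d := by omega
        have hbase : (0:ℝ) ≤ ((d:ℝ)-s)/d := by
          apply div_nonneg _ hd0.le
          have : (s:ℝ) ≤ d := by exact_mod_cast hsd.le
          linarith
        have hbase1 : ((d:ℝ)-s)/d ≤ 1 := by
          rw [div_le_one hd0]
          have : (0:ℝ) ≤ s := by positivity
          linarith
        have hlam : (((d:ℝ)-s)/d)^(d-s+1) ≤ 1 := pow_le_one₀ hbase hbase1
        simp only [hf]
        apply div_le_div_of_nonneg_right ?_ (by positivity)
        calc (((d:ℝ)-s)/d)^(d-s+1) * u^s ≤ 1 * (4/3)^s :=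
              mul_le_mul hlam (pow_le_pow_left₀ hu0 hu s) (by positivity) (by norm_num)
          _ = (4/3)^s := one_mul _
      have step2 : ∑ s ∈ Ioc 3 (d-1), (4/3:ℝ)^s / s.factorial
          = ∑ s ∈ range d, (4/3:ℝ)^s / s.factorial - ∑ s ∈ range 4, (4/3:ℝ)^s / s.factorial := by
        rw [Finset.range_eq_Ico, Finset.range_eq_Ico,
          ← Finset.sum_Ico_consecutive _ (by omega : 0 ≤ 4) (by omega : 4 ≤ d)]
        rw [show Ioc 3 (d-1) = Ico 4 d from by ext a; simp [mem_Ioc, mem_Ico]; omega]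
        ring
      have step3 : ∑ s ∈ range d, (4/3:ℝ)^s / s.factorial ≤ Real.exp (4/3) :=
        Real.sum_le_exp_of_nonneg (by norm_num) d
      have step4 : ∑ s ∈ range 4, (4/3:ℝ)^s / s.factorial = 293/81 := by
        norm_num [Finset.sum_range_succ, Nat.factorial]
      rw [step2, step4] at step1
      linarith
    have := exp43
    linarith

lemma uB1 (x : ℝ) (hx : 45 ≤ x) : 40*x ≤ (x-2)^2 := by nlinarith

lemma uB2 (c x : ℝ) (hc : 5 ≤ c) (hx : 6*c^2-16*c+13 ≤ x) : 3*c^2*x ≤ (x-c+2)^2 := by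
  have hm : 0 ≤ x - (6*c^2-16*c+13) := by linarith
  have he : 0 ≤ c - 5 := by linarith
  nlinarith [sq_nonneg (x - (6*c^2-16*c+13)), mul_nonneg hm (by nlinarith : (0:ℝ) ≤ 9*c^2-30*c+30),
    mul_nonneg (mul_nonneg he he) (mul_nonneg he he), mul_nonneg (mul_nonneg he he) he,
    mul_nonneg he he]

lemma IccIoc (m : ℕ) : Finset.Icc 1 m = Finset.Ioc 0 m := by
  ext x; simp [Finset.mem_Icc, Finset.mem_Ioc]; omega

lemma keyBound (d n s : ℕ) (a : ℂ) (hx : 1 ≤ a.re) (hs0 : 0 < s) (hsd : s ≤ d - 1)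
    (hd : 4 ≤ d) (hn : 3*d ≤ n) :
    ‖(hyperF d n s a)‖ ≤ (((d:ℝ)-s)/d)^(d-s+1)
      * (4*(d:ℝ)^2*n/((n:ℝ)-d+2)^2)^s / (s.factorial : ℝ)
      * ∏ j ∈ Finset.Icc 1 (n-1), ‖((d:ℂ)*a + j)‖ := by
  have hsd' : s + 1 ≤ d := by omega
  have hd0 : (0:ℝ) < d := by
    have : (4:ℝ) ≤ d := by exact_mod_cast hd
    linarith
  have hds0 : (0:ℝ) ≤ (d:ℝ) - s := by
    have : (s:ℝ) ≤ (d:ℝ) := by exact_mod_cast (by omega : s ≤ d)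
    linarith
  have hnd2 : (0:ℝ) < (n:ℝ) - d + 2 := by
    have h1 : (d:ℝ) ≤ (n:ℝ) := by exact_mod_cast (by omega : d ≤ n)
    linarith
  set F : ℕ → ℝ := fun j => ‖(((d:ℂ) - s)*a + j - s)‖ with hF
  set G : ℕ → ℝ := fun j => ‖((d:ℂ)*a + j)‖ with hG
  have habs : ‖(hyperF d n s a)‖ = (n.choose s : ℝ) * ∏ j ∈ Icc 1 (n-1), F j := by
    unfold hyperF
    rw [norm_mul, norm_prod]
    simp [Complex.norm_natCast, hF]
  have hsplitF : ∀ H : ℕ → ℝ, ∏ j ∈ Icc 1 (n-1), H j =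
      ((∏ j ∈ Ioc 0 (s-1), H j) * ∏ j ∈ Ioc (s-1) d, H j) * ∏ j ∈ Ioc d (n-1), H j := by
    intro H
    rw [IccIoc, Finset.prod_Ioc_consecutive H (by omega : 0 ≤ s-1) (by omega : s-1 ≤ d),
      Finset.prod_Ioc_consecutive H (by omega : 0 ≤ d) (by omega : d ≤ n-1)]
  have hP1 : ∏ j ∈ Ioc 0 (s-1), F j ≤ ∏ j ∈ Ioc 0 (s-1), G j := by
    apply Finset.prod_le_prod (fun j _ => norm_nonneg _)
    intro j hj
    simp only [mem_Ioc] at hj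
    exact facA d s j a hx (by omega) (by omega)
  have hP2 : ∏ j ∈ Ioc (s-1) d, F j ≤ (((d:ℝ)-s)/d)^(d-s+1) * ∏ j ∈ Ioc (s-1) d, G j := by
    calc ∏ j ∈ Ioc (s-1) d, F j ≤ ∏ j ∈ Ioc (s-1) d, ((((d:ℝ)-s)/d) * G j) := by
          apply Finset.prod_le_prod (fun j _ => norm_nonneg _)
          intro j hj
          simp only [mem_Ioc] at hj
          rw [div_mul_eq_mul_div, le_div_iff₀ hd0]
          have := facB d s j a hx (by omega) (by omega) hsd'
          linarith [this]
      _ = (((d:ℝ)-s)/d)^(d-s+1) * ∏ j ∈ Ioc (s-1) d, G j := by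
          rw [Finset.prod_mul_distrib, Finset.prod_const, Nat.card_Ioc]
          congr 2
          omega
  have hP3 : ∏ j ∈ Ioc d (n-1), F j
      ≤ ((2*(d:ℝ))^(2*s)/((n:ℝ)-d+2)^(2*s)) * ∏ j ∈ Ioc d (n-1), G j := by
    have step1 : ∏ j ∈ Ioc d (n-1), F j
        ≤ ∏ j ∈ Ioc d (n-1), ((((d+j-2*s : ℕ) : ℝ)/((d+j : ℕ) : ℝ)) * G j) := by
      apply Finset.prod_le_prod (fun j _ => norm_nonneg _)
      intro j hj
      simp only [mem_Ioc] at hj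
      have hdj : (0:ℝ) < ((d+j:ℕ):ℝ) := by
        have : (1:ℕ) ≤ d + j := by omega
        exact_mod_cast Nat.lt_of_lt_of_le Nat.zero_lt_one this
      rw [div_mul_eq_mul_div, le_div_iff₀ hdj]
      have hc := facC d s j a hx (by omega) (by omega) hsd'
      have e1 : ((d+j-2*s : ℕ) : ℝ) = (d:ℝ) + j - 2*s := by
        push_cast [Nat.cast_sub (by omega : 2*s ≤ d + j)]; ring
      have e2 : ((d+j : ℕ) : ℝ) = (d:ℝ) + j := by push_cast; ring
      rw [e1, e2]
      linarith [hc]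
    have step2 : ∏ j ∈ Ioc d (n-1), ((((d+j-2*s : ℕ) : ℝ)/((d+j : ℕ) : ℝ)) * G j)
        = ((((∏ j ∈ Ioc d (n-1), (d+j-2*s) : ℕ)) : ℝ)/(((∏ j ∈ Ioc d (n-1), (d+j) : ℕ)) : ℝ))
            * ∏ j ∈ Ioc d (n-1), G j := by
      rw [Finset.prod_mul_distrib, Finset.prod_div_distrib, ← Nat.cast_prod, ← Nat.cast_prod]
    have hBpos : (0:ℝ) < ((∏ j ∈ Ioc d (n-1), (d+j) : ℕ) : ℝ) := by
      have : 0 < ∏ j ∈ Ioc d (n-1), (d+j) := Finset.prod_pos (fun j hj => by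
        simp only [mem_Ioc] at hj; omega)
      exact_mod_cast this
    have hratio : ((((∏ j ∈ Ioc d (n-1), (d+j-2*s) : ℕ)) : ℝ)/(((∏ j ∈ Ioc d (n-1), (d+j) : ℕ)) : ℝ))
        ≤ (2*(d:ℝ))^(2*s)/((n:ℝ)-d+2)^(2*s) := by
      rw [div_le_div_iff₀ hBpos (by positivity)]
      have hnp := natProd d n s (by omega) hsd' hd hn
      have e3 : ((n-d+2 : ℕ) : ℝ) = (n:ℝ)-d+2 := by
        push_cast [Nat.cast_sub (by omega : d ≤ n)]; ring
      have hnpR : ((n:ℝ)-d+2)^(2*s) * ((∏ j ∈ Ioc d (n-1), (d + j - 2*s) : ℕ) : ℝ)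
          ≤ (2*(d:ℝ))^(2*s) * ((∏ j ∈ Ioc d (n-1), (d + j) : ℕ) : ℝ) := by
        rw [← e3]
        exact_mod_cast hnp
      rw [mul_comm (((∏ j ∈ Ioc d (n-1), (d + j - 2*s) : ℕ)) : ℝ)]
      exact hnpR
    calc ∏ j ∈ Ioc d (n-1), F j
        ≤ ((((∏ j ∈ Ioc d (n-1), (d+j-2*s) : ℕ)) : ℝ)/(((∏ j ∈ Ioc d (n-1), (d+j) : ℕ)) : ℝ))
            * ∏ j ∈ Ioc d (n-1), G j := by rw [← step2]; exact step1
      _ ≤ ((2*(d:ℝ))^(2*s)/((n:ℝ)-d+2)^(2*s)) * ∏ j ∈ Ioc d (n-1), G j := by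
          apply mul_le_mul_of_nonneg_right hratio
          exact Finset.prod_nonneg (fun j _ => norm_nonneg _)
  -- combine
  have hFnn : ∀ (t : Finset ℕ), (0:ℝ) ≤ ∏ j ∈ t, F j :=
    fun t => Finset.prod_nonneg (fun j _ => norm_nonneg _)
  have hGnn : ∀ (t : Finset ℕ), (0:ℝ) ≤ ∏ j ∈ t, G j :=
    fun t => Finset.prod_nonneg (fun j _ => norm_nonneg _)
  have hLam0 : (0:ℝ) ≤ (((d:ℝ)-s)/d)^(d-s+1) := by positivity
  have hR0 : (0:ℝ) ≤ (2*(d:ℝ))^(2*s)/((n:ℝ)-d+2)^(2*s) := by positivity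
  have hprod : ∏ j ∈ Icc 1 (n-1), F j
      ≤ ((((d:ℝ)-s)/d)^(d-s+1) * ((2*(d:ℝ))^(2*s)/((n:ℝ)-d+2)^(2*s)))
        * ∏ j ∈ Icc 1 (n-1), G j := by
    rw [hsplitF F, hsplitF G]
    calc ((∏ j ∈ Ioc 0 (s-1), F j) * ∏ j ∈ Ioc (s-1) d, F j) * ∏ j ∈ Ioc d (n-1), F j
        ≤ ((∏ j ∈ Ioc 0 (s-1), G j) * ((((d:ℝ)-s)/d)^(d-s+1) * ∏ j ∈ Ioc (s-1) d, G j))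
            * (((2*(d:ℝ))^(2*s)/((n:ℝ)-d+2)^(2*s)) * ∏ j ∈ Ioc d (n-1), G j) := by
          apply mul_le_mul (mul_le_mul hP1 hP2 (hFnn _) (hGnn _)) hP3 (hFnn _)
          exact mul_nonneg (hGnn _) (mul_nonneg hLam0 (hGnn _))
      _ = ((((d:ℝ)-s)/d)^(d-s+1) * ((2*(d:ℝ))^(2*s)/((n:ℝ)-d+2)^(2*s)))
            * (((∏ j ∈ Ioc 0 (s-1), G j) * ∏ j ∈ Ioc (s-1) d, G j) * ∏ j ∈ Ioc d (n-1), G j) := by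
          ring
  have hchoose : (n.choose s : ℝ) ≤ (n:ℝ)^s / (s.factorial : ℝ) := Nat.choose_le_pow_div s n
  have hchoose0 : (0:ℝ) ≤ (n.choose s : ℝ) := by positivity
  have hru : (((d:ℝ)-s)/d)^(d-s+1) * ((n:ℝ)^s / (s.factorial : ℝ))
      * ((2*(d:ℝ))^(2*s)/((n:ℝ)-d+2)^(2*s))
      = (((d:ℝ)-s)/d)^(d-s+1) * (4*(d:ℝ)^2*n/((n:ℝ)-d+2)^2)^s / (s.factorial : ℝ) := by
    rw [pow_mul, pow_mul, show ((2:ℝ)*d)^2 = 4*(d:ℝ)^2 from by ring, div_pow, mul_pow]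
    ring
  calc ‖(hyperF d n s a)‖ = (n.choose s : ℝ) * ∏ j ∈ Icc 1 (n-1), F j := habs
    _ ≤ (n.choose s : ℝ) * (((((d:ℝ)-s)/d)^(d-s+1) * ((2*(d:ℝ))^(2*s)/((n:ℝ)-d+2)^(2*s)))
          * ∏ j ∈ Icc 1 (n-1), G j) := by
        apply mul_le_mul_of_nonneg_left hprod hchoose0
    _ ≤ ((n:ℝ)^s / (s.factorial : ℝ)) * (((((d:ℝ)-s)/d)^(d-s+1)
          * ((2*(d:ℝ))^(2*s)/((n:ℝ)-d+2)^(2*s))) * ∏ j ∈ Icc 1 (n-1), G j) := by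
        apply mul_le_mul_of_nonneg_right hchoose
        exact mul_nonneg (mul_nonneg hLam0 hR0) (hGnn _)
    _ = ((((d:ℝ)-s)/d)^(d-s+1) * ((n:ℝ)^s / (s.factorial : ℝ))
          * ((2*(d:ℝ))^(2*s)/((n:ℝ)-d+2)^(2*s))) * ∏ j ∈ Icc 1 (n-1), G j := by ring
    _ = (((d:ℝ)-s)/d)^(d-s+1) * (4*(d:ℝ)^2*n/((n:ℝ)-d+2)^2)^s / (s.factorial : ℝ)
          * ∏ j ∈ Icc 1 (n-1), G j := by rw [hru]

theorem stmt_1 (d n : ℕ) (hd : 4 ≤ d) (hn : 6 * (d : ℤ) ^ 2 - 16 * d + 13 ≤ (n : ℤ))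
    (a : ℂ) (ha : ehrhartPoly d n a = 0) :
    a.re < 1 := by
  by_contra hx'
  push_neg at hx'
  have hx : 1 ≤ a.re := hx'
  have hdZ : (4:ℤ) ≤ (d:ℤ) := by exact_mod_cast hd
  have hn45 : 45 ≤ n := by
    have : (45:ℤ) ≤ (n:ℤ) := by nlinarith
    exact_mod_cast this
  have h3d : 3*d ≤ n := by
    have : (3:ℤ)*d ≤ (n:ℤ) := by nlinarith
    exact_mod_cast this
  -- the sum is zero
  have hsum : ∑ s ∈ Finset.range d, (-1:ℂ) ^ s * hyperF d n s a = 0 := by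
    unfold ehrhartPoly at ha
    rcases mul_eq_zero.1 ha with h | h
    · exfalso
      rw [div_eq_zero_iff] at h
      rcases h with h | h
      · exact one_ne_zero h
      · exact Nat.cast_ne_zero.2 (Nat.factorial_ne_zero _) h
    · exact h
  -- split off the s = 0 term
  have h0mem : (0:ℕ) ∈ Finset.range d := by simp; omega
  have herase : (Finset.range d).erase 0 = Ioc 0 (d-1) := by
    ext x; simp [Finset.mem_erase, Finset.mem_Ioc]; omega
  have hsplit : hyperF d n 0 a = - ∑ s ∈ Ioc 0 (d-1), (-1:ℂ)^s * hyperF d n s a := by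
    have := Finset.add_sum_erase (Finset.range d) (fun s => (-1:ℂ)^s * hyperF d n s a) h0mem
    rw [herase] at this
    rw [hsum] at this
    simp only [pow_zero, one_mul] at this
    linear_combination this
  -- D
  set G : ℕ → ℝ := fun j => ‖((d:ℂ)*a + j)‖ with hG
  set D : ℝ := ∏ j ∈ Finset.Icc 1 (n-1), G j with hD
  have hGpos : ∀ j, 1 ≤ j → 0 < G j := by
    intro j hj
    apply norm_pos_iff.mpr
    intro hzero
    have hre : ((d:ℂ)*a + j).re = (d:ℝ)*a.re + j := by
      simp [Complex.add_re, Complex.mul_re]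
    rw [hzero] at hre
    simp at hre
    have hd0 : (4:ℝ) ≤ d := by exact_mod_cast hd
    have hj0 : (1:ℝ) ≤ j := by exact_mod_cast hj
    nlinarith
  have hDpos : 0 < D := by
    apply Finset.prod_pos
    intro j hj
    simp only [Finset.mem_Icc] at hj
    exact hGpos j hj.1
  have habs0 : ‖(hyperF d n 0 a)‖ = D := by
    unfold hyperF
    rw [norm_mul, norm_prod]
    simp only [Nat.choose_zero_right, Nat.cast_one, norm_one, one_mul, Nat.cast_zero, sub_zero,
      Nat.cast_zero]
    rfl
  -- u and its bound
  set u : ℝ := 4*(d:ℝ)^2*n/((n:ℝ)-d+2)^2 with hu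
  have hnR : (45:ℝ) ≤ (n:ℝ) := by exact_mod_cast hn45
  have hdR : (4:ℝ) ≤ (d:ℝ) := by exact_mod_cast hd
  have hnd2 : (0:ℝ) < (n:ℝ)-d+2 := by
    have : (d:ℝ) ≤ n := by
      have : d ≤ n := by omega
      exact_mod_cast this
    linarith
  have hu0 : 0 ≤ u := by
    rw [hu]
    positivity
  have hucase : (d = 4 ∧ u ≤ 8/5) ∨ (5 ≤ d ∧ u ≤ 4/3) := by
    rcases eq_or_lt_of_le hd with h4 | h5
    · left
      refine ⟨h4.symm, ?_⟩
      rw [hu, div_le_iff₀ (by positivity)]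
      have := uB1 (n:ℝ) hnR
      rw [← h4]
      norm_num
      nlinarith
    · right
      refine ⟨h5, ?_⟩
      have hnZ : 6*((d:ℝ))^2 - 16*d + 13 ≤ (n:ℝ) := by exact_mod_cast hn
      have hd5R : (5:ℝ) ≤ d := by exact_mod_cast h5
      have := uB2 (d:ℝ) (n:ℝ) hd5R hnZ
      rw [hu, div_le_iff₀ (by positivity)]
      nlinarith
  have hsb := sumBound d hd u hu0 hucase
  -- final chain
  have hchain : D ≤ (∑ s ∈ Ioc 0 (d-1), (((d:ℝ)-s)/d)^(d-s+1) * u^s / (s.factorial : ℝ)) * D := by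
    calc D = ‖(hyperF d n 0 a)‖ := habs0.symm
      _ = ‖(∑ s ∈ Ioc 0 (d-1), (-1:ℂ)^s * hyperF d n s a)‖ := by
          rw [hsplit, norm_neg]
      _ ≤ ∑ s ∈ Ioc 0 (d-1), ‖((-1:ℂ)^s * hyperF d n s a)‖ :=
          norm_sum_le _ _
      _ = ∑ s ∈ Ioc 0 (d-1), ‖(hyperF d n s a)‖ := by
          apply Finset.sum_congr rfl
          intro s hs
          rw [norm_mul, norm_pow]
          simp
      _ ≤ ∑ s ∈ Ioc 0 (d-1), (((d:ℝ)-s)/d)^(d-s+1) * u^s / (s.factorial : ℝ) * D := by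
          apply Finset.sum_le_sum
          intro s hs
          simp only [mem_Ioc] at hs
          exact keyBound d n s a hx hs.1 hs.2 hd h3d
      _ = (∑ s ∈ Ioc 0 (d-1), (((d:ℝ)-s)/d)^(d-s+1) * u^s / (s.factorial : ℝ)) * D := by
          rw [← Finset.sum_mul]
  nlinarith [hchain, hsb, hDpos]
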